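/- arXiv:math/0508438 — 3 statements merged into one kernel-verified Lean document; each statement's English description precedes it below -/
import Mathlib

section
/- For all i, j ∈ ℤ, the wedging and contracting operators on full fermionic Fock space satisfy the Clifford algebra relations: ψ_i ψ_j* + ψ_j* ψ_i = δ_{ij}·id, ψ_i ψ_j + ψ_j ψ_i = 0, and ψ_i* ψ_j* + ψ_j* ψ_i* = 0 (as linear operators on F). -/
open Finsupp

/-- A semi-infinite monomial: a strictly decreasing sequence `seq : ℕ → ℤ` such that
for some `m : ℤ` (its charge) one has `seq k = m - k` for all sufficiently large `k`. -/
structure SIM : Type where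
  seq : ℕ → ℤ
  anti : StrictAnti seq
  ex_charge : ∃ m : ℤ, ∃ N : ℕ, ∀ k, N ≤ k → seq k = m - (k : ℤ)

/-- Full fermionic Fock space: the free `ℂ`-vector space on the set of all
semi-infinite monomials. -/
abbrev FockF : Type := SIM →₀ ℂ

namespace SIM

/-- `φ` is a semi-infinite monomial of charge `m`. -/
def HasCharge (φ : SIM) (m : ℤ) : Prop := ∃ N : ℕ, ∀ k, N ≤ k → φ.seq k = m - (k : ℤ)

theorem exists_lt (φ : SIM) (j : ℤ) : ∃ n : ℕ, φ.seq n < j := by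
  obtain ⟨m, N, hN⟩ := φ.ex_charge
  refine ⟨N + (m - j).toNat + 1, ?_⟩
  have h1 := hN (N + (m - j).toNat + 1) (by omega)
  omega

/-- The position at which `j` is inserted into `φ`: the least `n` with `φ.seq n < j`.
If `i_s > j > i_{s+1}` this equals `s + 1`, and it equals `0` if `j > i_0`. -/
noncomputable def wedgePos (φ : SIM) (j : ℤ) : ℕ := Nat.find (φ.exists_lt j)

/-- The semi-infinite monomial obtained from `φ` by inserting `j` (assuming `j` does not
occur in `φ`). -/
noncomputable def insertSIM (φ : SIM) (j : ℤ) (hj : ∀ s, φ.seq s ≠ j) : SIM where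
  seq k := if k < φ.wedgePos j then φ.seq k else if k = φ.wedgePos j then j else φ.seq (k - 1)
  anti := by
    have hs : φ.seq (φ.wedgePos j) < j := Nat.find_spec (φ.exists_lt j)
    have hm : ∀ k, k < φ.wedgePos j → j < φ.seq k := by
      intro k hk
      have h1 := Nat.find_min (φ.exists_lt j) hk
      have h2 := hj k
      omega
    have ha : ∀ a b : ℕ, a < b → φ.seq b < φ.seq a := fun a b h => φ.anti h
    apply strictAnti_nat_of_succ_lt
    intro k
    try dsimp only
    rcases lt_trichotomy k (φ.wedgePos j) with hk | hk | hk
    · rcases Nat.lt_or_ge (k + 1) (φ.wedgePos j) with hk1 | hk1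
      · rw [if_pos hk, if_pos hk1]
        exact ha k (k + 1) (by omega)
      · have hk1' : k + 1 = φ.wedgePos j := by omega
        rw [if_pos hk, if_neg (by omega), if_pos hk1']
        exact hm k hk
    · rw [if_neg (by omega), if_neg (by omega), if_neg (by omega), if_pos hk,
        (by omega : k + 1 - 1 = k), hk]
      exact hs
    · rw [if_neg (by omega), if_neg (by omega), if_neg (by omega), if_neg (by omega),
        (by omega : k + 1 - 1 = k)]
      exact ha (k - 1) k (by omega)
  ex_charge := by
    obtain ⟨m, N, hN⟩ := φ.ex_charge
    refine ⟨m + 1, N + φ.wedgePos j + 1, fun k hk => ?_⟩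
    try dsimp only
    rw [if_neg (by omega), if_neg (by omega)]
    have h3 := hN (k - 1) (by omega)
    omega

/-- The semi-infinite monomial obtained from `φ` by deleting the entry in position `s`. -/
noncomputable def removeSIM (φ : SIM) (s : ℕ) : SIM where
  seq k := if k < s then φ.seq k else φ.seq (k + 1)
  anti := by
    apply strictAnti_nat_of_succ_lt
    intro k
    try dsimp only
    split_ifs <;> exact φ.anti (by omega)
  ex_charge := by
    obtain ⟨m, N, hN⟩ := φ.ex_charge
    refine ⟨m - 1, N + s, fun k hk => ?_⟩
    try dsimp only
    rw [if_neg (by omega)]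
    have h3 := hN (k + 1) (by omega)
    omega



end SIM

open Classical in
/-- The wedging operator `ψ_j` on full fermionic Fock space.  On a basis element
`φ = (i_0, i_1, ...)` it is `0` if `j = i_s` for some `s`, and otherwise it is
`(-1)^n` times the basis element obtained by inserting `j` in position `n`
(so `(-1)^{s+1}` when `i_s > j > i_{s+1}`, and `+1` when `j > i_0`). -/
noncomputable def psi (j : ℤ) : FockF →ₗ[ℂ] FockF :=
  Finsupp.lift FockF ℂ SIM fun φ =>
    if hj : ∀ s, φ.seq s ≠ j then
      ((-1 : ℂ) ^ (φ.wedgePos j)) • Finsupp.single (φ.insertSIM j hj) 1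
    else 0

open Classical in
/-- The contracting operator `ψ_j^*` on full fermionic Fock space.  On a basis element
`φ = (i_0, i_1, ...)` it is `0` if `j ≠ i_s` for all `s`, and `(-1)^s` times the basis
element obtained by deleting `i_s` if `j = i_s`. -/
noncomputable def psiStar (j : ℤ) : FockF →ₗ[ℂ] FockF :=
  Finsupp.lift FockF ℂ SIM fun φ =>
    if hj : ∃ s, φ.seq s = j then
      ((-1 : ℂ) ^ hj.choose) • Finsupp.single (φ.removeSIM hj.choose) 1
    else 0


namespace SIM

theorem seq_injective (φ : SIM) : Function.Injective φ.seq := φ.anti.injective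

theorem ext' {φ ψ : SIM} (h : ∀ k, φ.seq k = ψ.seq k) : φ = ψ := by
  cases φ; cases ψ
  simp only [mk.injEq]
  exact funext h

theorem wedgePos_lt (φ : SIM) (j : ℤ) : φ.seq (φ.wedgePos j) < j :=
  Nat.find_spec (φ.exists_lt j)

theorem wedgePos_min {φ : SIM} {j : ℤ} {k : ℕ} (h : k < φ.wedgePos j) : j ≤ φ.seq k :=
  le_of_not_gt (Nat.find_min (φ.exists_lt j) h)

theorem wedgePos_eq {φ : SIM} {j : ℤ} {n : ℕ} (h1 : φ.seq n < j)
    (h2 : ∀ k, k < n → j ≤ φ.seq k) : φ.wedgePos j = n :=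
  le_antisymm (Nat.find_min' _ h1)
    (le_of_not_gt fun h => absurd (wedgePos_lt φ j) (not_lt.2 (h2 _ h)))

theorem insert_seq (φ : SIM) (j : ℤ) (hj : ∀ s, φ.seq s ≠ j) (k : ℕ) :
    (φ.insertSIM j hj).seq k =
      if k < φ.wedgePos j then φ.seq k else if k = φ.wedgePos j then j else φ.seq (k - 1) :=
  rfl

theorem remove_seq (φ : SIM) (s k : ℕ) :
    (φ.removeSIM s).seq k = if k < s then φ.seq k else φ.seq (k + 1) := rfl

theorem insert_ne {φ : SIM} {j x : ℤ} (hj : ∀ s, φ.seq s ≠ j) (hx : x ≠ j)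
    (h : ∀ s, φ.seq s ≠ x) : ∀ k, (φ.insertSIM j hj).seq k ≠ x := by
  intro k
  rw [insert_seq]
  split_ifs
  · exact h k
  · exact fun e => hx e.symm
  · exact h (k - 1)

theorem remove_ne {φ : SIM} {s : ℕ} {x : ℤ} (h : ∀ t, φ.seq t ≠ x) :
    ∀ k, (φ.removeSIM s).seq k ≠ x := by
  intro k
  rw [remove_seq]
  split_ifs
  · exact h k
  · exact h (k + 1)

theorem insert_self (φ : SIM) (j : ℤ) (hj : ∀ s, φ.seq s ≠ j) :
    (φ.insertSIM j hj).seq (φ.wedgePos j) = j := by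
  rw [insert_seq, if_neg (lt_irrefl _), if_pos rfl]

/-- Entries strictly before the insertion position are strictly greater than `j`. -/
theorem lt_seq_of_lt_wedgePos {φ : SIM} {j : ℤ} (hj : ∀ s, φ.seq s ≠ j) {k : ℕ}
    (h : k < φ.wedgePos j) : j < φ.seq k :=
  lt_of_le_of_ne (wedgePos_min h) (fun e => hj k e.symm)



theorem remove_ne_self {φ : SIM} {s : ℕ} {j : ℤ} (hs : φ.seq s = j) :
    ∀ k, (φ.removeSIM s).seq k ≠ j := by
  intro k
  rw [remove_seq]
  split_ifs with h
  · exact fun e => absurd (φ.seq_injective (e.trans hs.symm)) (by omega)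
  · exact fun e => absurd (φ.seq_injective (e.trans hs.symm)) (by omega)

theorem remove_mem {φ : SIM} {t s : ℕ} (h : t ≠ s) :
    ∃ k, (φ.removeSIM s).seq k = φ.seq t := by
  rcases Nat.lt_or_ge t s with h1 | h1
  · exact ⟨t, by rw [remove_seq, if_pos h1]⟩
  · refine ⟨t - 1, ?_⟩
    rw [remove_seq, if_neg (by omega)]
    congr 1
    omega

theorem insert_mem {φ : SIM} {j : ℤ} (hj : ∀ s, φ.seq s ≠ j) (t : ℕ) :
    ∃ k, (φ.insertSIM j hj).seq k = φ.seq t := by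
  rcases Nat.lt_or_ge t (φ.wedgePos j) with h1 | h1
  · exact ⟨t, by rw [insert_seq, if_pos h1]⟩
  · refine ⟨t + 1, ?_⟩
    rw [insert_seq, if_neg (by omega), if_neg (by omega)]
    congr 1

theorem wedgePos_remove_self {φ : SIM} {s : ℕ} {j : ℤ} (hs : φ.seq s = j) :
    (φ.removeSIM s).wedgePos j = s := by
  apply wedgePos_eq
  · rw [remove_seq, if_neg (lt_irrefl _)]
    have := φ.anti (by omega : s < s + 1)
    omega
  · intro k hk
    rw [remove_seq, if_pos hk]
    have := φ.anti hk
    omega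

theorem insert_remove_self {φ : SIM} {s : ℕ} {j : ℤ} (hs : φ.seq s = j) :
    (φ.removeSIM s).insertSIM j (remove_ne_self hs) = φ := by
  apply ext'
  intro k
  rw [insert_seq, wedgePos_remove_self hs]
  split_ifs with h1 h2
  · rw [remove_seq, if_pos h1]
  · rw [h2, hs]
  · rw [remove_seq, if_neg (by omega)]
    congr 1
    omega

theorem remove_insert_self (φ : SIM) (j : ℤ) (hj : ∀ s, φ.seq s ≠ j) :
    (φ.insertSIM j hj).removeSIM (φ.wedgePos j) = φ := by
  apply ext'
  intro k
  rw [remove_seq]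
  split_ifs with h1
  · rw [insert_seq, if_pos h1]
  · rw [insert_seq, if_neg (by omega), if_neg (by omega)]
    congr 1

theorem wedgePos_remove_of_le {φ : SIM} {i : ℤ} {s : ℕ} (h : φ.wedgePos i ≤ s) :
    (φ.removeSIM s).wedgePos i = φ.wedgePos i := by
  have h1 := wedgePos_lt φ i
  apply wedgePos_eq
  · rw [remove_seq]
    split_ifs with h2
    · exact h1
    · have h3 : φ.wedgePos i = s := by omega
      rw [h3] at h1 ⊢
      have h4 := φ.anti (by omega : s < s + 1)
      omega
  · intro k hk
    rw [remove_seq, if_pos (by omega)]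
    exact wedgePos_min hk

theorem wedgePos_remove_of_gt {φ : SIM} {i : ℤ} {s : ℕ} (h : s < φ.wedgePos i) :
    (φ.removeSIM s).wedgePos i = φ.wedgePos i - 1 := by
  have h1 := wedgePos_lt φ i
  apply wedgePos_eq
  · rw [remove_seq, if_neg (by omega)]
    rw [(by omega : φ.wedgePos i - 1 + 1 = φ.wedgePos i)]
    exact h1
  · intro k hk
    rw [remove_seq]
    split_ifs with h2
    · exact wedgePos_min (by omega)
    · exact wedgePos_min (by omega)

theorem insert_remove_comm_le {φ : SIM} {i : ℤ} {s : ℕ} (hi : ∀ t, φ.seq t ≠ i)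
    (h : φ.wedgePos i ≤ s) :
    (φ.removeSIM s).insertSIM i (remove_ne hi) =
      (φ.insertSIM i hi).removeSIM (s + 1) := by
  apply ext'
  intro k
  simp only [insert_seq, remove_seq, wedgePos_remove_of_le h]
  split_ifs <;> first | rfl | (congr 1; omega) | (exfalso; omega)

theorem insert_remove_comm_gt {φ : SIM} {i : ℤ} {s : ℕ} (hi : ∀ t, φ.seq t ≠ i)
    (h : s < φ.wedgePos i) :
    (φ.removeSIM s).insertSIM i (remove_ne hi) =
      (φ.insertSIM i hi).removeSIM s := by
  apply ext'
  intro k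
  simp only [insert_seq, remove_seq, wedgePos_remove_of_gt h]
  split_ifs <;> first | rfl | (congr 1; omega) | (exfalso; omega)

theorem wedgePos_le_wedgePos {φ : SIM} {i j : ℤ} (h : j < i) :
    φ.wedgePos i ≤ φ.wedgePos j :=
  Nat.find_min' _ (lt_trans (wedgePos_lt φ j) h)

theorem wedgePos_insert_lt {φ : SIM} {i j : ℤ} (hj : ∀ s, φ.seq s ≠ j) (h : j < i) :
    (φ.insertSIM j hj).wedgePos i = φ.wedgePos i := by
  have hnm := wedgePos_le_wedgePos (φ := φ) h
  apply wedgePos_eq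
  · rw [insert_seq]
    split_ifs with h1 h2
    · exact wedgePos_lt φ i
    · exact h
    · have : φ.wedgePos i = φ.wedgePos j := by omega
      exact absurd (wedgePos_lt φ i) (by omega)
  · intro k hk
    rw [insert_seq, if_pos (by omega)]
    exact wedgePos_min hk

theorem wedgePos_insert_gt {φ : SIM} {i j : ℤ} (hi : ∀ s, φ.seq s ≠ i) (h : j < i) :
    (φ.insertSIM i hi).wedgePos j = φ.wedgePos j + 1 := by
  have hnm := wedgePos_le_wedgePos (φ := φ) h
  apply wedgePos_eq
  · rw [insert_seq, if_neg (by omega), if_neg (by omega)]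
    rw [(by omega : φ.wedgePos j + 1 - 1 = φ.wedgePos j)]
    exact wedgePos_lt φ j
  · intro k hk
    rw [insert_seq]
    split_ifs with h1 h2
    · exact le_trans (le_of_lt h) (wedgePos_min (by omega))
    · exact le_of_lt h
    · exact wedgePos_min (by omega)

theorem insert_insert_comm {φ : SIM} {i j : ℤ} (hi : ∀ s, φ.seq s ≠ i)
    (hj : ∀ s, φ.seq s ≠ j) (h : j < i) :
    (φ.insertSIM j hj).insertSIM i (insert_ne hj (ne_of_gt h) hi) =
      (φ.insertSIM i hi).insertSIM j (insert_ne hi (ne_of_lt h) hj) := by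
  have hnm := wedgePos_le_wedgePos (φ := φ) h
  apply ext'
  intro k
  simp only [insert_seq, wedgePos_insert_lt hj h, wedgePos_insert_gt hi h]
  split_ifs <;> first | rfl | (congr 1; omega) | (exfalso; omega)

theorem remove_remove_comm (φ : SIM) {t s : ℕ} (h : t < s) :
    (φ.removeSIM s).removeSIM t = (φ.removeSIM t).removeSIM (s - 1) := by
  apply ext'
  intro k
  simp only [remove_seq]
  split_ifs <;> first | rfl | (congr 1; omega) | (exfalso; omega)

end SIM

open Classical in
theorem psi_single (j : ℤ) (φ : SIM) :
    psi j (Finsupp.single φ 1) =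
      if hj : ∀ s, φ.seq s ≠ j then
        ((-1 : ℂ) ^ (φ.wedgePos j)) • (Finsupp.single (φ.insertSIM j hj) 1 : FockF)
      else 0 := by
  simp only [psi, Finsupp.lift_apply]
  rw [Finsupp.sum_single_index (by simp), one_smul]

theorem psiStar_single_of_ne (j : ℤ) (φ : SIM) (hj : ∀ s, φ.seq s ≠ j) :
    psiStar j (Finsupp.single φ 1) = 0 := by
  classical
  have h : ¬∃ s, φ.seq s = j := by push_neg; exact hj
  simp only [psiStar, Finsupp.lift_apply]
  rw [Finsupp.sum_single_index (by simp), one_smul, dif_neg h]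

theorem psiStar_single_of_eq (j : ℤ) (φ : SIM) (s : ℕ) (hs : φ.seq s = j) :
    psiStar j (Finsupp.single φ 1) = ((-1 : ℂ) ^ s) • (Finsupp.single (φ.removeSIM s) 1 : FockF) := by
  classical
  have h : ∃ s, φ.seq s = j := ⟨s, hs⟩
  have hc : h.choose = s := φ.seq_injective (h.choose_spec.trans hs.symm)
  simp only [psiStar, Finsupp.lift_apply]
  rw [Finsupp.sum_single_index (by simp)]
  rw [dif_pos h, hc, one_smul]


theorem lhom_ext_single {F G : FockF →ₗ[ℂ] FockF}
    (h : ∀ φ : SIM, F (Finsupp.single φ 1) = G (Finsupp.single φ 1)) : F = G :=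
  Finsupp.lhom_ext fun a b => by
    rw [← Finsupp.smul_single_one, map_smul, map_smul, h]

theorem psi_single_of_mem {i : ℤ} {φ : SIM} {t : ℕ} (ht : φ.seq t = i) :
    psi i (Finsupp.single φ 1) = 0 := by
  rw [psi_single, dif_neg (by push_neg; exact ⟨t, ht⟩)]

theorem psi_psi_single_lt {i j : ℤ} (h : j < i) (φ : SIM)
    (hi : ∀ s, φ.seq s ≠ i) (hj : ∀ s, φ.seq s ≠ j) :
    psi i (psi j (Finsupp.single φ 1)) + psi j (psi i (Finsupp.single φ 1)) = 0 := by
  rw [psi_single j φ, dif_pos hj, map_smul, psi_single i (φ.insertSIM j hj),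
      dif_pos (SIM.insert_ne hj (ne_of_gt h) hi)]
  rw [psi_single i φ, dif_pos hi, map_smul, psi_single j (φ.insertSIM i hi),
      dif_pos (SIM.insert_ne hi (ne_of_lt h) hj)]
  rw [SIM.wedgePos_insert_lt hj h, SIM.wedgePos_insert_gt hi h,
      SIM.insert_insert_comm hi hj h]
  rw [smul_smul, smul_smul, ← add_smul]
  apply smul_eq_zero_of_left
  rw [pow_succ]; ring

theorem psi_psi_single (i j : ℤ) (φ : SIM) :
    psi i (psi j (Finsupp.single φ 1)) + psi j (psi i (Finsupp.single φ 1)) = 0 := by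
  by_cases hi : ∀ s, φ.seq s ≠ i
  · by_cases hj : ∀ s, φ.seq s ≠ j
    · rcases lt_trichotomy i j with h | h | h
      · rw [add_comm]; exact psi_psi_single_lt h φ hj hi
      · subst h
        rw [psi_single i φ, dif_pos hi, map_smul,
            psi_single_of_mem (φ.insert_self i hi), smul_zero, add_zero]
      · exact psi_psi_single_lt h φ hi hj
    · push_neg at hj; obtain ⟨s, hs⟩ := hj
      rw [psi_single_of_mem hs, map_zero, zero_add, psi_single i φ, dif_pos hi, map_smul]
      obtain ⟨k, hk⟩ := SIM.insert_mem hi s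
      rw [psi_single_of_mem (hk.trans hs), smul_zero]
  · push_neg at hi; obtain ⟨t, ht⟩ := hi
    rw [psi_single_of_mem ht, map_zero, add_zero]
    by_cases hj : ∀ s, φ.seq s ≠ j
    · rw [psi_single j φ, dif_pos hj, map_smul]
      obtain ⟨k, hk⟩ := SIM.insert_mem hj t
      rw [psi_single_of_mem (hk.trans ht), smul_zero]
    · push_neg at hj; obtain ⟨s, hs⟩ := hj
      rw [psi_single_of_mem hs, map_zero]

theorem psiStar_psiStar_single_lt {i j : ℤ} {φ : SIM} {t s : ℕ} (ht : φ.seq t = i)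
    (hs : φ.seq s = j) (h : t < s) :
    psiStar i (psiStar j (Finsupp.single φ 1))
      + psiStar j (psiStar i (Finsupp.single φ 1)) = 0 := by
  obtain ⟨u, rfl⟩ : ∃ u, s = u + 1 := ⟨s - 1, by omega⟩
  rw [psiStar_single_of_eq j φ (u + 1) hs, map_smul,
      psiStar_single_of_eq i _ t (by rw [SIM.remove_seq, if_pos h]; exact ht),
      psiStar_single_of_eq i φ t ht, map_smul,
      psiStar_single_of_eq j _ u (by rw [SIM.remove_seq, if_neg (by omega)]; exact hs),
      SIM.remove_remove_comm φ h]
  simp only [Nat.add_sub_cancel]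
  rw [smul_smul, smul_smul, ← add_smul]
  apply smul_eq_zero_of_left
  rw [pow_succ]; ring

theorem psiStar_psiStar_single (i j : ℤ) (φ : SIM) :
    psiStar i (psiStar j (Finsupp.single φ 1))
      + psiStar j (psiStar i (Finsupp.single φ 1)) = 0 := by
  by_cases hi : ∀ u, φ.seq u ≠ i
  · rw [psiStar_single_of_ne i φ hi, map_zero, add_zero]
    by_cases hj : ∀ u, φ.seq u ≠ j
    · rw [psiStar_single_of_ne j φ hj, map_zero]
    · push_neg at hj; obtain ⟨s, hs⟩ := hj
      rw [psiStar_single_of_eq j φ s hs, map_smul,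
          psiStar_single_of_ne i _ (SIM.remove_ne hi), smul_zero]
  · push_neg at hi; obtain ⟨t, ht⟩ := hi
    by_cases hj : ∀ u, φ.seq u ≠ j
    · rw [psiStar_single_of_ne j φ hj, map_zero, zero_add,
          psiStar_single_of_eq i φ t ht, map_smul,
          psiStar_single_of_ne j _ (SIM.remove_ne hj), smul_zero]
    · push_neg at hj; obtain ⟨s, hs⟩ := hj
      rcases lt_trichotomy t s with h | h | h
      · exact psiStar_psiStar_single_lt ht hs h
      · subst h
        have hij : i = j := by rw [← ht, hs]
        subst hij
        rw [psiStar_single_of_eq i φ t ht, map_smul,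
            psiStar_single_of_ne i _ (SIM.remove_ne_self ht), smul_zero, add_zero]
      · rw [add_comm]; exact psiStar_psiStar_single_lt hs ht h

theorem psi_psiStar_single_self (j : ℤ) (φ : SIM) :
    psi j (psiStar j (Finsupp.single φ 1)) + psiStar j (psi j (Finsupp.single φ 1))
      = Finsupp.single φ 1 := by
  by_cases hj : ∀ s, φ.seq s ≠ j
  · rw [psiStar_single_of_ne j φ hj, map_zero, zero_add,
        psi_single j φ, dif_pos hj, map_smul,
        psiStar_single_of_eq j _ (φ.wedgePos j) (φ.insert_self j hj),
        SIM.remove_insert_self φ j hj, smul_smul, ← pow_add,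
        Even.neg_one_pow ⟨_, rfl⟩, one_smul]
  · push_neg at hj; obtain ⟨s, hs⟩ := hj
    rw [psi_single_of_mem hs, map_zero, add_zero,
        psiStar_single_of_eq j φ s hs, map_smul,
        psi_single j (φ.removeSIM s), dif_pos (SIM.remove_ne_self hs),
        SIM.wedgePos_remove_self hs, SIM.insert_remove_self hs,
        smul_smul, ← pow_add, Even.neg_one_pow ⟨_, rfl⟩, one_smul]

theorem psi_psiStar_single {i j : ℤ} (hij : i ≠ j) (φ : SIM) :
    psi i (psiStar j (Finsupp.single φ 1)) + psiStar j (psi i (Finsupp.single φ 1)) = 0 := by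
  by_cases hj : ∀ s, φ.seq s ≠ j
  · rw [psiStar_single_of_ne j φ hj, map_zero, zero_add]
    by_cases hi : ∀ s, φ.seq s ≠ i
    · rw [psi_single i φ, dif_pos hi, map_smul,
          psiStar_single_of_ne j _ (SIM.insert_ne hi (Ne.symm hij) hj), smul_zero]
    · push_neg at hi; obtain ⟨t, ht⟩ := hi
      rw [psi_single_of_mem ht, map_zero]
  · push_neg at hj; obtain ⟨s, hs⟩ := hj
    rw [psiStar_single_of_eq j φ s hs, map_smul]
    by_cases hi : ∀ u, φ.seq u ≠ i
    · rw [psi_single i (φ.removeSIM s), dif_pos (SIM.remove_ne hi),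
          psi_single i φ, dif_pos hi, map_smul]
      by_cases hns : φ.wedgePos i ≤ s
      · have hocc : (φ.insertSIM i hi).seq (s + 1) = j := by
          rw [SIM.insert_seq, if_neg (by omega), if_neg (by omega)]
          simpa using hs
        rw [SIM.wedgePos_remove_of_le hns, SIM.insert_remove_comm_le hi hns,
            psiStar_single_of_eq j _ (s + 1) hocc]
        rw [smul_smul, smul_smul, ← add_smul]
        apply smul_eq_zero_of_left
        rw [pow_succ]; ring
      · push_neg at hns
        have hocc : (φ.insertSIM i hi).seq s = j := by
          rw [SIM.insert_seq, if_pos hns]; exact hs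
        rw [SIM.wedgePos_remove_of_gt hns, SIM.insert_remove_comm_gt hi hns,
            psiStar_single_of_eq j _ s hocc]
        obtain ⟨u, hu⟩ : ∃ u, φ.wedgePos i = u + 1 := ⟨φ.wedgePos i - 1, by omega⟩
        rw [hu]
        simp only [Nat.add_sub_cancel]
        rw [smul_smul, smul_smul, ← add_smul]
        apply smul_eq_zero_of_left
        rw [pow_succ]; ring
    · push_neg at hi; obtain ⟨t, ht⟩ := hi
      rw [psi_single_of_mem ht, map_zero, add_zero]
      have hts : t ≠ s := fun e => hij (by rw [← ht, e, hs])
      obtain ⟨k, hk⟩ := SIM.remove_mem (φ := φ) hts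
      rw [psi_single_of_mem (hk.trans ht), smul_zero]

/-- the wedging and contracting operators satisfy the Clifford algebra
relations `ψ_i ψ_j^* + ψ_j^* ψ_i = δ_{ij} id`, `ψ_i ψ_j + ψ_j ψ_i = 0` and
`ψ_i^* ψ_j^* + ψ_j^* ψ_i^* = 0` as linear operators on `F`. -/
theorem clifford_relations (i j : ℤ) :
    (psi i ∘ₗ psiStar j + psiStar j ∘ₗ psi i
      = if i = j then (LinearMap.id : FockF →ₗ[ℂ] FockF) else 0) ∧
    (psi i ∘ₗ psi j + psi j ∘ₗ psi i = 0) ∧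
    (psiStar i ∘ₗ psiStar j + psiStar j ∘ₗ psiStar i = 0) := by
  refine ⟨?_, ?_, ?_⟩
  · by_cases hij : i = j
    · subst hij
      rw [if_pos rfl]
      apply lhom_ext_single
      intro φ
      simp only [LinearMap.add_apply, LinearMap.coe_comp, Function.comp_apply,
        LinearMap.id_apply]
      exact psi_psiStar_single_self i φ
    · rw [if_neg hij]
      apply lhom_ext_single
      intro φ
      simp only [LinearMap.add_apply, LinearMap.coe_comp, Function.comp_apply,
        LinearMap.zero_apply]
      exact psi_psiStar_single hij φ
  · apply lhom_ext_single
    intro φ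
    simp only [LinearMap.add_apply, LinearMap.coe_comp, Function.comp_apply,
      LinearMap.zero_apply]
    exact psi_psi_single i j φ
  · apply lhom_ext_single
    intro φ
    simp only [LinearMap.add_apply, LinearMap.coe_comp, Function.comp_apply,
      LinearMap.zero_apply]
    exact psiStar_psiStar_single i j φ
end

section
/- Let V be a complex vector space equipped with linear operators a_n for n ∈ ℤ∖{0} satisfying [a_m, a_n] = m δ_{m,−n}·id_V, and let v ∈ V be nonzero with a_n v = 0 for all n > 0. Then the vectors a_{−λ_1} a_{−λ_2} ⋯ a_{−λ_ℓ} v, indexed by partitions λ = (λ_1 ≥ … ≥ λ_ℓ ≥ 1), are linearly independent; and if moreover the only subspaces of V invariant under all a_n are 0 and V, these vectors form a basis of V (uniqueness of the irreducible oscillator representation, Corollary 9.13 of Kac). -/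
/-- A partition, encoded as a non-increasing list of positive integers
(the empty list is the empty partition). -/
def SortedPartList : Type := {l : List ℕ+ // l.Pairwise (· ≥ ·)}

/-- The vector `a_{-λ_1} a_{-λ_2} ⋯ a_{-λ_ℓ} v` associated to a partition
`λ = (λ_1 ≥ … ≥ λ_ℓ ≥ 1)`. -/
noncomputable def partVector {V : Type*} [AddCommGroup V] [Module ℂ V]
    (a : ℤ → (V →ₗ[ℂ] V)) (v : V) (l : SortedPartList) : V :=
  (l.1.map fun i => a (-((i : ℕ) : ℤ))).prod v

section Aux

variable {V : Type*} [AddCommGroup V] [Module ℂ V]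
variable (a : ℤ → (V →ₗ[ℂ] V)) (v : V)

/-- The vector associated to an arbitrary (unsorted) list. -/
noncomputable def Fvec (l : List ℕ+) : V :=
  (l.map fun i : ℕ+ => a (-((i : ℕ) : ℤ))).prod v

lemma Fvec_nil : Fvec a v [] = v := by
  simp [Fvec]

lemma Fvec_cons (i : ℕ+) (l : List ℕ+) :
    Fvec a v (i :: l) = a (-((i : ℕ) : ℤ)) (Fvec a v l) := by
  simp [Fvec, Module.End.mul_apply]

lemma coe_pnat_list (l : List ℕ+) :
    (do let a ← l; pure ((a : ℕ))) = l.map (fun i : ℕ+ => (i : ℕ)) :=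
  List.map_eq_flatMap.symm

lemma partVector_eq_Fvec (l : SortedPartList) : partVector a v l = Fvec a v l.1 := by
  unfold partVector Fvec
  rw [show (↑(l.1) : List ℕ) = l.1.map (fun i : ℕ+ => (i : ℕ)) from coe_pnat_list l.1,
    List.map_map]
  rfl

variable (hcomm : ∀ m n : ℤ, m ≠ 0 → n ≠ 0 →
      a m ∘ₗ a n - a n ∘ₗ a m
        = if m = -n then (m : ℂ) • (LinearMap.id : V →ₗ[ℂ] V) else 0)

include hcomm

lemma commute_neg (i j : ℕ+) :
    Commute (a (-((i : ℕ) : ℤ))) (a (-((j : ℕ) : ℤ))) := by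
  have h := hcomm (-((i : ℕ) : ℤ)) (-((j : ℕ) : ℤ))
    (neg_ne_zero.mpr (by exact_mod_cast i.ne_zero))
    (neg_ne_zero.mpr (by exact_mod_cast j.ne_zero))
  rw [if_neg (by
    intro hc
    have : -((i : ℕ) : ℤ) = ((j : ℕ) : ℤ) := by simpa using hc
    have hi : (0 : ℤ) < ((i : ℕ) : ℤ) := by exact_mod_cast i.pos
    have hj : (0 : ℤ) < ((j : ℕ) : ℤ) := by exact_mod_cast j.pos
    omega)] at h
  have h2 := sub_eq_zero.mp h
  show _ * _ = _ * _
  simp only [Module.End.mul_eq_comp, h2]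

lemma Fvec_perm {l₁ l₂ : List ℕ+} (h : l₁.Perm l₂) :
    Fvec a v l₁ = Fvec a v l₂ := by
  unfold Fvec
  rw [List.Perm.prod_eq' (h.map _)
    (List.pairwise_map.mpr (List.pairwise_of_forall fun x y => commute_neg a hcomm x y))]

lemma swap_apply (m i : ℕ+) (x : V) :
    a ((m : ℕ) : ℤ) (a (-((i : ℕ) : ℤ)) x)
      = a (-((i : ℕ) : ℤ)) (a ((m : ℕ) : ℤ) x)
        + (if i = m then ((m : ℕ) : ℂ) • x else 0) := by
  have h := hcomm ((m : ℕ) : ℤ) (-((i : ℕ) : ℤ))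
    (by exact_mod_cast m.ne_zero)
    (neg_ne_zero.mpr (by exact_mod_cast i.ne_zero))
  have h' := LinearMap.ext_iff.mp h x
  simp only [LinearMap.sub_apply, LinearMap.comp_apply] at h'
  by_cases hmi : i = m
  · subst hmi
    rw [if_pos (by simp)] at h'
    rw [if_pos rfl]
    simp only [LinearMap.smul_apply, LinearMap.id_apply] at h'
    have := sub_eq_iff_eq_add.mp h'
    rw [this]
    push_cast
    abel
  · rw [if_neg (by
      intro hc
      have : ((m : ℕ) : ℤ) = ((i : ℕ) : ℤ) := by simpa using hc
      exact hmi (PNat.coe_injective (by exact_mod_cast this.symm)))] at h'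
    rw [if_neg hmi]
    simp only [LinearMap.zero_apply] at h'
    have := sub_eq_zero.mp h'
    rw [this, add_zero]

variable (hann : ∀ n : ℤ, 0 < n → a n v = 0)
include hann

lemma ann_Fvec (m : ℕ+) (l : List ℕ+) :
    a ((m : ℕ) : ℤ) (Fvec a v l)
      = (((m : ℕ) : ℂ) * (l.count m : ℂ)) • Fvec a v (l.erase m) := by
  induction l with
  | nil =>
      rw [Fvec_nil, hann _ (by exact_mod_cast m.pos)]
      simp
  | cons i t ih =>
      rw [Fvec_cons, swap_apply a hcomm m i, ih]
      rw [map_smul]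
      by_cases hi : i = m
      · subst hi
        rw [if_pos rfl]
        rw [List.count_cons_self, List.erase_cons_head]
        by_cases hc : i ∈ t
        · have hperm : (i :: t.erase i).Perm t := (List.perm_cons_erase hc).symm
          rw [← Fvec_cons, Fvec_perm a v hcomm hperm]
          rw [← add_smul]
          congr 1
          push_cast
          ring
        · rw [List.count_eq_zero_of_not_mem hc]
          simp
      · rw [if_neg hi, add_zero, List.count_cons_of_ne (by exact hi) ,
          List.erase_cons_tail (by simpa using (fun h => hi h))]
        rw [Fvec_cons]

omit hcomm hann in
/-- Weight of a list. -/
def wght (l : List ℕ+) : ℕ := (l.map fun i : ℕ+ => (i : ℕ)).sum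

omit hcomm hann in
lemma wght_erase {m : ℕ+} {l : List ℕ+} (h : m ∈ l) :
    wght l = (m : ℕ) + wght (l.erase m) := by
  have hperm : l.Perm (m :: l.erase m) := List.perm_cons_erase h
  unfold wght
  rw [(hperm.map fun i : ℕ+ => (i : ℕ)).sum_eq]
  simp

lemma Gop_zero (μ : List ℕ+) : ∀ l : List ℕ+,
    wght l ≤ wght μ → (↑μ : Multiset ℕ+) ≠ (↑l : Multiset ℕ+) →
    (μ.map fun i : ℕ+ => a ((i : ℕ) : ℤ)).prod (Fvec a v l) = 0 := by
  induction μ using List.reverseRecOn with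
  | nil =>
      intro l hw hne
      cases l with
      | nil => exact absurd rfl hne
      | cons i t =>
          exfalso
          have hi := i.pos
          have h0 : (i : ℕ) + wght t ≤ 0 := by simpa [wght] using hw
          omega
  | append_singleton μ m ih =>
      intro l hw hne
      rw [List.map_append, List.prod_append]
      simp only [List.map_cons, List.map_nil, List.prod_cons, List.prod_nil, mul_one,
        Module.End.mul_apply]
      rw [ann_Fvec a v hcomm hann m l]
      rw [map_smul]
      by_cases hm : m ∈ l
      · rw [ih (l.erase m) ?_ ?_, smul_zero]
        · have h1 := wght_erase (m := m) hm
          have h2 : wght (μ ++ [m]) = wght μ + (m : ℕ) := by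
            unfold wght; simp
          omega
        · intro hc
          apply hne
          have : (↑(μ ++ [m]) : Multiset ℕ+) = m ::ₘ (↑μ : Multiset ℕ+) := by
            simp [Multiset.cons_swap]
          rw [this, hc]
          exact (Multiset.cons_erase (Multiset.mem_coe.mpr hm)).symm ▸ rfl
      · rw [List.count_eq_zero_of_not_mem hm]
        simp

lemma Gop_diag (μ : List ℕ+) : ∀ l : List ℕ+,
    (↑μ : Multiset ℕ+) = (↑l : Multiset ℕ+) →
    ∃ c : ℂ, c ≠ 0 ∧ (μ.map fun i : ℕ+ => a ((i : ℕ) : ℤ)).prod (Fvec a v l) = c • v := by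
  induction μ using List.reverseRecOn with
  | nil =>
      intro l h
      have : l = [] := by
        have := h.symm
        simpa [Multiset.coe_eq_zero] using this
      subst this
      exact ⟨1, one_ne_zero, by simp [Fvec_nil]⟩
  | append_singleton μ m ih =>
      intro l h
      have hm : m ∈ l := by
        have h2 : m ∈ (↑l : Multiset ℕ+) := by
          rw [← h]; simp
        exact Multiset.mem_coe.mp h2
      rw [List.map_append, List.prod_append]
      simp only [List.map_cons, List.map_nil, List.prod_cons, List.prod_nil, mul_one,
        Module.End.mul_apply]
      rw [ann_Fvec a v hcomm hann m l, map_smul]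
      obtain ⟨c, hc, heq⟩ := ih (l.erase m) (by
        have h1 : (↑(μ ++ [m]) : Multiset ℕ+) = m ::ₘ (↑μ : Multiset ℕ+) := by
          simp [Multiset.cons_swap]
        have h2 : (↑l : Multiset ℕ+) = m ::ₘ (↑(l.erase m) : Multiset ℕ+) := by
          exact_mod_cast (Multiset.cons_erase (by exact_mod_cast hm)).symm
        rw [h1, h2] at h
        exact (Multiset.cons_inj_right m).mp h)
      refine ⟨(((m : ℕ) : ℂ) * (l.count m : ℂ)) * c, ?_, ?_⟩
      · have hcount : 0 < l.count m := List.count_pos_iff.mpr hm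
        have : ((l.count m : ℕ) : ℂ) ≠ 0 := by exact_mod_cast hcount.ne'
        have hmne : ((m : ℕ) : ℂ) ≠ 0 := by exact_mod_cast m.ne_zero
        exact mul_ne_zero (mul_ne_zero hmne this) hc
      · rw [heq, smul_smul]

end Aux

/-- if `V` carries operators `a_n` (`n ≠ 0`) with
`[a_m, a_n] = m δ_{m,−n} id_V` and `v ≠ 0` satisfies `a_n v = 0` for `n > 0`, then the
vectors `a_{-λ_1} ⋯ a_{-λ_ℓ} v` indexed by partitions are linearly independent; if
moreover the only subspaces of `V` invariant under all the `a_n` are `0` and `V`, these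
vectors form a basis of `V`. -/
theorem oscillator_uniqueness {V : Type*} [AddCommGroup V] [Module ℂ V]
    (a : ℤ → (V →ₗ[ℂ] V))
    (hcomm : ∀ m n : ℤ, m ≠ 0 → n ≠ 0 →
      a m ∘ₗ a n - a n ∘ₗ a m
        = if m = -n then (m : ℂ) • (LinearMap.id : V →ₗ[ℂ] V) else 0)
    (v : V) (hv : v ≠ 0) (hann : ∀ n : ℤ, 0 < n → a n v = 0) :
    LinearIndependent ℂ (partVector a v) ∧
    ((∀ S : Submodule ℂ V, (∀ n : ℤ, n ≠ 0 → ∀ x ∈ S, a n x ∈ S) → S = ⊥ ∨ S = ⊤) →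
      Submodule.span ℂ (Set.range (partVector a v)) = ⊤) := by
  classical
  constructor
  · rw [linearIndependent_iff']
    intro s g hsum i hi
    by_contra hgi
    set t : Finset SortedPartList := s.filter (fun l => g l ≠ 0) with ht
    have htne : t.Nonempty := ⟨i, Finset.mem_filter.mpr ⟨hi, hgi⟩⟩
    obtain ⟨l₀, hl₀t, hmax⟩ := t.exists_max_image (fun l => wght l.1) htne
    have hl₀s : l₀ ∈ s := (Finset.mem_filter.mp hl₀t).1
    have hgl₀ : g l₀ ≠ 0 := (Finset.mem_filter.mp hl₀t).2
    set G : V →ₗ[ℂ] V := (l₀.1.map fun i : ℕ+ => a ((i : ℕ) : ℤ)).prod with hG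
    have happ : G (∑ l ∈ s, g l • partVector a v l) = 0 := by rw [hsum, map_zero]
    rw [map_sum] at happ
    obtain ⟨c, hc, heq⟩ := Gop_diag a v hcomm hann l₀.1 l₀.1 rfl
    have hsingle : ∑ l ∈ s, G (g l • partVector a v l) = g l₀ • (c • v) := by
      rw [Finset.sum_eq_single_of_mem l₀ hl₀s]
      · rw [map_smul, partVector_eq_Fvec, ← hG] at *
        rw [heq]
      · intro b hb hne
        rw [map_smul]
        by_cases hgb : g b = 0
        · rw [hgb, zero_smul]
        · have hbt : b ∈ t := Finset.mem_filter.mpr ⟨hb, hgb⟩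
          have hwb : wght b.1 ≤ wght l₀.1 := hmax b hbt
          have hmne : (↑l₀.1 : Multiset ℕ+) ≠ (↑b.1 : Multiset ℕ+) := by
            intro hc2
            apply hne
            have hperm : b.1.Perm l₀.1 := by
              rw [← Multiset.coe_eq_coe]; exact hc2.symm
            have := List.Perm.eq_of_pairwise' b.2 l₀.2 hperm
            exact Subtype.ext this
          rw [partVector_eq_Fvec, Gop_zero a v hcomm hann l₀.1 b.1 hwb hmne, smul_zero]
    rw [hsingle] at happ
    rw [smul_smul] at happ
    exact hgl₀ (by
      have := smul_eq_zero.mp happ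
      rcases this with h | h
      · exact (mul_eq_zero.mp h).resolve_right hc
      · exact absurd h hv)
  · intro hirr
    set S := Submodule.span ℂ (Set.range (partVector a v)) with hS
    have hmemF : ∀ l : List ℕ+, l.Pairwise (· ≥ ·) → Fvec a v l ∈ S := by
      intro l hl
      apply Submodule.subset_span
      exact ⟨⟨l, hl⟩, partVector_eq_Fvec a v ⟨l, hl⟩⟩
    have hmem_any : ∀ l : List ℕ+, Fvec a v l ∈ S := by
      intro l
      set l' : List ℕ+ := Multiset.sort (↑l : Multiset ℕ+) (· ≥ ·) with hl'
      have hperm : l.Perm l' := by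
        rw [← Multiset.coe_eq_coe, Multiset.sort_eq]
      rw [Fvec_perm a v hcomm hperm]
      exact hmemF l' (Multiset.pairwise_sort _ _)
    have hinv : ∀ n : ℤ, n ≠ 0 → ∀ x ∈ S, a n x ∈ S := by
      intro n hn x hx
      induction hx using Submodule.span_induction with
      | mem x hxr =>
          obtain ⟨l, rfl⟩ := hxr
          rw [partVector_eq_Fvec]
          rcases lt_or_gt_of_ne hn with hneg | hpos
          · set m : ℕ+ := ⟨(-n).toNat, by omega⟩ with hm
            have hmn : -((m : ℕ) : ℤ) = n := by
              have h0 : (m : ℕ) = (-n).toNat := rfl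
              omega
            have : a n (Fvec a v l.1) = Fvec a v (m :: l.1) := by
              rw [Fvec_cons, hmn]
            rw [this]
            exact hmem_any (m :: l.1)
          · set m : ℕ+ := ⟨n.toNat, by omega⟩ with hm
            have hmn : ((m : ℕ) : ℤ) = n := by
              have h0 : (m : ℕ) = n.toNat := rfl
              omega
            rw [← hmn, ann_Fvec a v hcomm hann m l.1]
            exact Submodule.smul_mem _ _ (hmem_any (l.1.erase m))
      | zero => simpa using S.zero_mem
      | add x y hx hy ihx ihy => rw [map_add]; exact S.add_mem ihx ihy
      | smul c x hx ihx => rw [map_smul]; exact S.smul_mem c ihx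
    rcases hirr S hinv with hbot | htop
    · exfalso
      have hvS : v ∈ S := by
        have := hmemF [] (List.Pairwise.nil)
        rwa [Fvec_nil] at this
      rw [hbot] at hvS
      exact hv (Submodule.mem_bot ℂ |>.mp hvS)
    · exact htop
end

section
/- Let V be a complex vector space with a Hermitian (sesquilinear) form H, linear operators a_n for n ∈ ℤ∖{0} satisfying [a_m, a_n] = m δ_{m,−n}·id_V and H(a_n x, y) = H(x, a_{−n} y) for all n and all x, y, and a vector v with a_n v = 0 for all n > 0 and H(v, v) = 1. For a partition λ set p_λ = ∏_{i≥1} a_{−i}^{m_i(λ)} v, where m_i(λ) is the number of parts of λ equal to i, and set z_λ = ∏_{i≥1} i^{m_i(λ)} m_i(λ)!. Then H(p_λ, p_μ) = δ_{λ,μ} z_λ for all partitions λ, μ. -/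
instance : DecidableEq SortedPartList := fun l l' =>
  decidable_of_iff (l.1 = l'.1) Subtype.ext_iff.symm

/-- `m_i(λ)`: the number of parts of the partition `λ` equal to `i`. -/
def partMult (l : SortedPartList) (i : ℕ+) : ℕ := l.1.count i

/-- `z_λ = ∏_{i ≥ 1} i^{m_i(λ)} · m_i(λ)!` (a finite product). -/
def zPart (l : SortedPartList) : ℕ :=
  ∏ i ∈ l.1.toFinset, (i : ℕ) ^ partMult l i * Nat.factorial (partMult l i)

/-- `p_λ = ∏_{i ≥ 1} a_{-i}^{m_i(λ)} v`, realized as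
`a_{-λ_1} a_{-λ_2} ⋯ a_{-λ_ℓ} v` (the `a_{-i}`, `i > 0`, commute). -/
noncomputable def pPart {V : Type*} [AddCommGroup V] [Module ℂ V]
    (a : ℤ → (V →ₗ[ℂ] V)) (v : V) (l : SortedPartList) : V :=
  (l.1.map fun i => a (-((i : ℕ) : ℤ))).prod v

/-- The `z` statistic on bare lists. -/
private def zL (L : List ℕ+) : ℕ :=
  ∏ i ∈ L.toFinset, ((i:ℕ) ^ (List.count i L) * Nat.factorial (List.count i L))

private lemma zPart_eq_zL (l : SortedPartList) : zPart l = zL l.1 := rfl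

private lemma zL_cons (n : ℕ+) (t : List ℕ+) :
    zL (n::t) = (n:ℕ) * (List.count n t + 1) * zL t := by
  unfold zL
  have hcount : ∀ i : ℕ+, List.count i (n::t) = List.count i t + if i = n then 1 else 0 := by
    intro i
    rcases eq_or_ne i n with rfl | h
    · simp [List.count_cons]
    · simp [List.count_cons, h, Ne.symm h]
  by_cases hn : n ∈ t
  · have hfin : (n::t).toFinset = t.toFinset := by
      simp [List.toFinset_cons, Finset.insert_eq_self.2 (List.mem_toFinset.2 hn)]
    rw [hfin]
    have hmem : n ∈ t.toFinset := List.mem_toFinset.2 hn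
    rw [← Finset.mul_prod_erase _ _ hmem,
        ← Finset.mul_prod_erase _ (fun i : ℕ+ => (i:ℕ) ^ (List.count i t) * Nat.factorial (List.count i t)) hmem]
    have hrest : ∏ i ∈ t.toFinset.erase n, ((i:ℕ) ^ (List.count i (n::t)) * Nat.factorial (List.count i (n::t)))
        = ∏ i ∈ t.toFinset.erase n, ((i:ℕ) ^ (List.count i t) * Nat.factorial (List.count i t)) := by
      refine Finset.prod_congr rfl fun i hi => ?_
      have hne : i ≠ n := (Finset.mem_erase.1 hi).1
      rw [hcount, if_neg hne]; simp
    rw [hrest, hcount, if_pos rfl]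
    rw [pow_succ, Nat.factorial_succ]
    ring
  · have hc0 : List.count n t = 0 := List.count_eq_zero.2 hn
    rw [List.toFinset_cons, Finset.prod_insert (by simpa using hn)]
    have hrest : ∏ i ∈ t.toFinset, ((i:ℕ) ^ (List.count i (n::t)) * Nat.factorial (List.count i (n::t)))
        = ∏ i ∈ t.toFinset, ((i:ℕ) ^ (List.count i t) * Nat.factorial (List.count i t)) := by
      refine Finset.prod_congr rfl fun i hi => ?_
      have hne : i ≠ n := by rintro rfl; exact hn (List.mem_toFinset.1 hi)
      rw [hcount, if_neg hne]; simp
    rw [hrest, hcount, if_pos rfl, hc0]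
    simp [Nat.factorial]

section
variable {V : Type*} [AddCommGroup V] [Module ℂ V]

private theorem pPart_eq (a : ℤ → (V →ₗ[ℂ] V)) (v : V) (l : SortedPartList) :
    pPart a v l = (List.map (fun i : ℕ+ => a (-((i:ℕ):ℤ))) l.1).prod v := by
  have key : ∀ L : List ℕ+,
      (List.map (fun i : ℕ => a (-(i:ℤ))) (do let x ← L; pure ((x:ℕ))))
        = List.map (fun i : ℕ+ => a (-((i:ℕ):ℤ))) L := by
    intro L
    induction L with
    | nil => rfl
    | cons k t ih => simpa [List.flatMap_cons] using ih
  unfold pPart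
  rw [key]

private lemma prodPerm (a : ℤ → (V →ₗ[ℂ] V))
    (hcomm : ∀ m n : ℤ, m ≠ 0 → n ≠ 0 →
      a m ∘ₗ a n - a n ∘ₗ a m
        = if m = -n then (m : ℂ) • (LinearMap.id : V →ₗ[ℂ] V) else 0)
    {L M : List ℕ+} (h : List.Perm L M) :
    (List.map (fun i : ℕ+ => a (-((i:ℕ):ℤ))) L).prod
      = (List.map (fun i : ℕ+ => a (-((i:ℕ):ℤ))) M).prod := by
  refine List.Perm.prod_eq' (h.map _) ?_
  refine List.pairwise_of_forall_mem_list ?_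
  rintro x hx y hy
  obtain ⟨i, -, rfl⟩ := List.mem_map.1 hx
  obtain ⟨j, -, rfl⟩ := List.mem_map.1 hy
  have h := hcomm (-((i:ℕ):ℤ)) (-((j:ℕ):ℤ)) (by simp) (by simp)
  rw [if_neg (by intro hh; have h1 : 1 ≤ i.val := i.2; have h2 : 1 ≤ j.val := j.2; omega)] at h
  have h2 := sub_eq_zero.mp h
  simpa [Commute, SemiconjBy, Module.End.mul_eq_comp] using h2

private lemma key_annihilate (a : ℤ → (V →ₗ[ℂ] V))
    (hcomm : ∀ m n : ℤ, m ≠ 0 → n ≠ 0 →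
      a m ∘ₗ a n - a n ∘ₗ a m
        = if m = -n then (m : ℂ) • (LinearMap.id : V →ₗ[ℂ] V) else 0)
    (v : V) (hann : ∀ n : ℤ, 0 < n → a n v = 0) (n : ℕ+) :
    ∀ L : List ℕ+,
      a ((n:ℕ):ℤ) ((List.map (fun i : ℕ+ => a (-((i:ℕ):ℤ))) L).prod v)
        = (((n:ℕ) * List.count n L : ℕ) : ℂ) •
            (List.map (fun i : ℕ+ => a (-((i:ℕ):ℤ))) (L.erase n)).prod v := by
  have hn0 : ((n:ℕ):ℤ) ≠ 0 := by simp
  intro L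
  induction L with
  | nil => simp [hann ((n:ℕ):ℤ) (by exact_mod_cast n.2)]
  | cons k t ih =>
    by_cases hk : k = n
    · subst hk
      have h := hcomm ((k:ℕ):ℤ) (-((k:ℕ):ℤ)) hn0 (by simpa using hn0)
      rw [if_pos (by ring)] at h
      have happ : ∀ w : V, a ((k:ℕ):ℤ) (a (-((k:ℕ):ℤ)) w)
          = a (-((k:ℕ):ℤ)) (a ((k:ℕ):ℤ) w) + ((k:ℕ):ℂ) • w := by
        intro w
        have h3 := congrArg (fun T : V →ₗ[ℂ] V => T w) h
        simp only [LinearMap.sub_apply, LinearMap.comp_apply, LinearMap.smul_apply,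
          LinearMap.id_apply] at h3
        have hc : ((((k:ℕ):ℤ)):ℂ) = ((k:ℕ):ℂ) := by push_cast; ring
        rw [hc] at h3
        linear_combination (norm := module) h3
      simp only [List.map_cons, List.prod_cons, Module.End.mul_apply]
      rw [happ, ih]
      rw [List.erase_cons_head, List.count_cons_self]
      rcases Nat.eq_zero_or_pos (List.count k t) with hc | hc
      · rw [hc]; push_cast; simp
      · have hmem : k ∈ t := List.count_pos_iff.1 hc
        have hperm : List.Perm (k :: t.erase k) t := (List.perm_cons_erase hmem).symm
        have hpr := prodPerm a hcomm hperm
        simp only [List.map_cons, List.prod_cons] at hpr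
        have hrw : a (-((k:ℕ):ℤ)) ((List.map (fun i : ℕ+ => a (-((i:ℕ):ℤ))) (t.erase k)).prod v)
            = ((List.map (fun i : ℕ+ => a (-((i:ℕ):ℤ))) t).prod) v := by
          conv_rhs => rw [← hpr]
          simp [Module.End.mul_apply]
        rw [map_smul, hrw]
        push_cast
        match_scalars <;> ring
    · have h := hcomm ((n:ℕ):ℤ) (-((k:ℕ):ℤ)) hn0 (by simp)
      rw [if_neg (by simp only [neg_neg]; exact_mod_cast fun hh => hk (PNat.coe_injective hh).symm)] at h
      have h2 := sub_eq_zero.mp h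
      have happ : ∀ w : V, a ((n:ℕ):ℤ) (a (-((k:ℕ):ℤ)) w) = a (-((k:ℕ):ℤ)) (a ((n:ℕ):ℤ) w) := by
        intro w
        have h3 := congrArg (fun T : V →ₗ[ℂ] V => T w) h2
        simpa using h3
      simp only [List.map_cons, List.prod_cons, Module.End.mul_apply]
      rw [happ, ih, map_smul]
      rw [List.erase_cons_tail (by simpa using hk), List.count_cons_of_ne hk]
      simp [Module.End.mul_apply]

private lemma mainAux
    (H : V →ₛₗ[starRingEnd ℂ] V →ₗ[ℂ] ℂ)
    (a : ℤ → (V →ₗ[ℂ] V))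
    (hcomm : ∀ m n : ℤ, m ≠ 0 → n ≠ 0 →
      a m ∘ₗ a n - a n ∘ₗ a m
        = if m = -n then (m : ℂ) • (LinearMap.id : V →ₗ[ℂ] V) else 0)
    (hadj : ∀ n : ℤ, n ≠ 0 → ∀ x y : V, H (a n x) y = H x (a (-n) y))
    (v : V) (hann : ∀ n : ℤ, 0 < n → a n v = 0) (hvv : H v v = 1) :
    ∀ L M : List ℕ+, L.Pairwise (· ≥ ·) → M.Pairwise (· ≥ ·) →
      H ((List.map (fun i : ℕ+ => a (-((i:ℕ):ℤ))) L).prod v)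
        ((List.map (fun i : ℕ+ => a (-((i:ℕ):ℤ))) M).prod v)
        = if L = M then (zL L : ℂ) else 0 := by
  intro L
  induction L with
  | nil =>
    intro M _ _
    cases M with
    | nil => simpa [zL] using hvv
    | cons k t =>
      rw [if_neg (by simp)]
      simp only [List.map_cons, List.prod_cons, List.map_nil, List.prod_nil,
        Module.End.mul_apply, Module.End.one_apply]
      rw [← hadj ((k:ℕ):ℤ) (by simp) v _]
      rw [hann ((k:ℕ):ℤ) (by exact_mod_cast k.2)]
      simp
  | cons n s ih =>
    intro M hLs hMs
    have hss : s.Pairwise (· ≥ ·) := hLs.of_cons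
    have hMes : (M.erase n).Pairwise (· ≥ ·) := hMs.sublist (M.erase_sublist (a := n))
    simp only [List.map_cons, List.prod_cons, Module.End.mul_apply, Module.End.one_apply]
    have step : H (a (-((n:ℕ):ℤ)) ((List.map (fun i : ℕ+ => a (-((i:ℕ):ℤ))) s).prod v))
        ((List.map (fun i : ℕ+ => a (-((i:ℕ):ℤ))) M).prod v)
        = H ((List.map (fun i : ℕ+ => a (-((i:ℕ):ℤ))) s).prod v)
            (a ((n:ℕ):ℤ) ((List.map (fun i : ℕ+ => a (-((i:ℕ):ℤ))) M).prod v)) := by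
      have := hadj (-((n:ℕ):ℤ)) (by simp)
        ((List.map (fun i : ℕ+ => a (-((i:ℕ):ℤ))) s).prod v)
        ((List.map (fun i : ℕ+ => a (-((i:ℕ):ℤ))) M).prod v)
      rwa [neg_neg] at this
    rw [step, key_annihilate a hcomm v hann n M, map_smul,
      ih (M.erase n) hss hMes]
    by_cases hM : n :: s = M
    · subst hM
      rw [List.erase_cons_head, if_pos rfl, if_pos rfl, List.count_cons_self,
        zL_cons]
      push_cast
      simp only [smul_eq_mul]
      try ring
    · rw [if_neg hM]
      by_cases hse : s = M.erase n
      · rw [if_pos hse]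
        have hcnt : List.count n M = 0 := by
          by_contra hcnt
          have hmem : n ∈ M := List.count_pos_iff.1 (Nat.pos_of_ne_zero hcnt)
          have hperm : List.Perm M (n :: s) := by
            rw [hse]; exact List.perm_cons_erase hmem
          exact hM (List.Perm.eq_of_pairwise' (by exact hLs) hMs hperm.symm)
        rw [hcnt]
        simp
      · rw [if_neg hse]
        simp

end

/-- if `V` carries a Hermitian (sesquilinear) form `H`, operators `a_n`
with `[a_m, a_n] = m δ_{m,−n} id_V` and `H(a_n x, y) = H(x, a_{−n} y)`, and a vector `v`
with `a_n v = 0` for `n > 0` and `H(v,v) = 1`, then `H(p_λ, p_μ) = δ_{λμ} z_λ`. -/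
theorem pPart_inner_product {V : Type*} [AddCommGroup V] [Module ℂ V]
    (H : V →ₛₗ[starRingEnd ℂ] V →ₗ[ℂ] ℂ)
    (a : ℤ → (V →ₗ[ℂ] V))
    (hcomm : ∀ m n : ℤ, m ≠ 0 → n ≠ 0 →
      a m ∘ₗ a n - a n ∘ₗ a m
        = if m = -n then (m : ℂ) • (LinearMap.id : V →ₗ[ℂ] V) else 0)
    (hadj : ∀ n : ℤ, n ≠ 0 → ∀ x y : V, H (a n x) y = H x (a (-n) y))
    (v : V) (hann : ∀ n : ℤ, 0 < n → a n v = 0) (hvv : H v v = 1)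
    (l l' : SortedPartList) :
    H (pPart a v l) (pPart a v l') = if l = l' then (zPart l : ℂ) else 0 := by
  rw [pPart_eq, pPart_eq, mainAux H a hcomm hadj v hann hvv l.1 l'.1 l.2 l'.2,
    zPart_eq_zL]
  congr 1
  exact propext Subtype.val_inj
end
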